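/- For every θ ∈ (0,1) and every x > 0, one has x^θ · (1 + θ/x)^{θ-1} ≤ Γ(x+θ)/Γ(x) ≤ x^θ · (1 + 1/x)^θ. -/

import Mathlib

/-- For every `θ ∈ (0,1)` and every `x > 0`,
`x^θ (1 + θ/x)^(θ-1) ≤ Γ(x+θ)/Γ(x) ≤ x^θ (1 + 1/x)^θ`. -/
theorem gamma_ratio_bounds_theta_lt_one (θ x : ℝ) (hθ : θ ∈ Set.Ioo (0 : ℝ) 1) (hx : 0 < x) :
    x ^ θ * (1 + θ / x) ^ (θ - 1) ≤ Real.Gamma (x + θ) / Real.Gamma x ∧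
      Real.Gamma (x + θ) / Real.Gamma x ≤ x ^ θ * (1 + 1 / x) ^ θ := by
  obtain ⟨hθ0, hθ1⟩ := hθ
  have hxθ : 0 < x + θ := by linarith
  have hG : 0 < Real.Gamma x := Real.Gamma_pos_of_pos hx
  have hGθ : 0 < Real.Gamma (x + θ) := Real.Gamma_pos_of_pos hxθ
  constructor
  · -- lower bound
    have key : Real.Gamma (x + 1) ≤ Real.Gamma (x + θ) ^ θ * Real.Gamma (x + θ + 1) ^ (1 - θ) := by
      have := Real.Gamma_mul_add_mul_le_rpow_Gamma_mul_rpow_Gamma hxθ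
        (by linarith : (0:ℝ) < x + θ + 1) hθ0 (by linarith : (0:ℝ) < 1 - θ) (by ring)
      convert this using 2
      ring
    rw [Real.Gamma_add_one hx.ne', Real.Gamma_add_one hxθ.ne',
      Real.mul_rpow hxθ.le hGθ.le, ← mul_assoc, mul_comm (Real.Gamma (x+θ) ^ θ),
      mul_assoc, ← Real.rpow_add hGθ, add_sub_cancel, Real.rpow_one] at key
    -- key : x * Γ x ≤ (x+θ)^(1-θ) * Γ(x+θ)
    have hxx : x * x ^ (θ - 1) = x ^ θ := by
      nth_rewrite 1 [← Real.rpow_one x]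
      rw [← Real.rpow_add hx]; norm_num
    have hxp : (0:ℝ) < x ^ (θ - 1) := Real.rpow_pos_of_pos hx _
    have h1 : x ^ θ * (1 + θ / x) ^ (θ - 1) = x * (x + θ) ^ (θ - 1) := by
      have h' : 1 + θ / x = (x + θ) / x := by field_simp
      rw [h', Real.div_rpow hxθ.le hx.le]
      field_simp
      rw [hxx]
    have hpq : (x+θ) ^ (θ-1) * (x+θ) ^ (1-θ) = 1 := by
      rw [← Real.rpow_add hxθ]; norm_num
    rw [h1, le_div_iff₀ hG]
    calc x * (x+θ) ^ (θ-1) * Real.Gamma x = (x+θ) ^ (θ-1) * (x * Real.Gamma x) := by ring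
      _ ≤ (x+θ) ^ (θ-1) * ((x+θ) ^ (1-θ) * Real.Gamma (x+θ)) :=
          mul_le_mul_of_nonneg_left key (Real.rpow_pos_of_pos hxθ _).le
      _ = Real.Gamma (x+θ) := by rw [← mul_assoc, hpq, one_mul]
  · -- upper bound
    have key : Real.Gamma (x + θ) ≤ Real.Gamma x ^ (1 - θ) * Real.Gamma (x + 1) ^ θ := by
      have := Real.Gamma_mul_add_mul_le_rpow_Gamma_mul_rpow_Gamma hx
        (by linarith : (0:ℝ) < x + 1) (by linarith : (0:ℝ) < 1 - θ) hθ0 (by ring)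
      convert this using 2
      ring
    rw [Real.Gamma_add_one hx.ne', Real.mul_rpow hx.le hG.le, ← mul_assoc,
      mul_comm (Real.Gamma x ^ (1-θ)), mul_assoc, ← Real.rpow_add hG, sub_add_cancel,
      Real.rpow_one] at key
    -- key : Γ(x+θ) ≤ x ^ θ * Γ x
    have h2 : Real.Gamma (x + θ) / Real.Gamma x ≤ x ^ θ := by
      rw [div_le_iff₀ hG]; linarith [key]
    refine h2.trans ?_
    have h3 : (1:ℝ) ≤ (1 + 1 / x) ^ θ :=
      Real.one_le_rpow (le_add_of_nonneg_right (by positivity)) hθ0.le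
    exact le_mul_of_one_le_right (by positivity) h3
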